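/- Let μ and μ' be Borel measures on S¹×S¹ such that μ(A×B) = μ'(A×B) < ∞ for every pair of disjoint half-open arcs A, B ⊆ S¹. Then for every half-open arc E ⊆ S¹ one has μ((E×E)∖Δ) = μ'((E×E)∖Δ), where Δ ⊆ S¹×S¹ is the diagonal. -/

import Mathlib

open MeasureTheory Set

noncomputable section

local instance : Fact (0 < 2 * Real.pi) := ⟨by positivity⟩

/-- The representative of a point of the circle `S¹ = ℝ/2πℤ` in the interval `(0, 2π]`. -/
def circleRep (x : AddCircle (2 * Real.pi)) : ℝ :=
  (AddCircle.equivIoc (2 * Real.pi) 0 x : ℝ)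

/-- The open arc of points traversed when moving counterclockwise from `a` to `b`
(for `a ≠ b`): those `x` whose angular distance from `a` is smaller than that of `b`. -/
def Arc (a b : AddCircle (2 * Real.pi)) : Set (AddCircle (2 * Real.pi)) :=
  {x | circleRep (x - a) < circleRep (b - a)}

/-- A half-open arc of `S¹`: a set of the form `{a} ∪ Arc(a,b)` for distinct `a, b`. -/
def IsHalfOpenArc (E : Set (AddCircle (2 * Real.pi))) : Prop :=
  ∃ a b : AddCircle (2 * Real.pi), a ≠ b ∧ E = insert a (Arc a b)


lemma two_pi_pos : (0:ℝ) < 2 * Real.pi := by positivity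

lemma circleRep_coe (r : ℝ) : circleRep (r : AddCircle (2 * Real.pi)) = toIocMod two_pi_pos 0 r := by
  simp [circleRep, AddCircle.equivIoc, QuotientAddGroup.equivIocMod_coe]

lemma circleRep_mem (x : AddCircle (2 * Real.pi)) : circleRep x ∈ Ioc 0 (2 * Real.pi) := by
  have := (AddCircle.equivIoc (2 * Real.pi) 0 x).2
  simpa [circleRep] using this

lemma circleRep_coe_of_mem {r : ℝ} (h : r ∈ Ioc 0 (2 * Real.pi)) :
    circleRep (r : AddCircle (2 * Real.pi)) = r := by
  rw [circleRep_coe]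
  exact (toIocMod_eq_self two_pi_pos).mpr (by simpa using h)

lemma coe_circleRep (x : AddCircle (2 * Real.pi)) :
    ((circleRep x : ℝ) : AddCircle (2 * Real.pi)) = x :=
  (AddCircle.equivIoc (2 * Real.pi) 0).symm_apply_apply x

lemma circleRep_injective : Function.Injective circleRep := by
  intro x y h
  rw [← coe_circleRep x, ← coe_circleRep y, h]

lemma measurable_circleRep : Measurable circleRep := by
  have : circleRep = (fun y : Ioc (0:ℝ) (0 + 2*Real.pi) => (y:ℝ)) ∘
      (AddCircle.measurableEquivIoc (2*Real.pi) 0) := rfl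
  rw [this]
  exact measurable_subtype_coe.comp (MeasurableEquiv.measurable _)

lemma toIocMod_eval {u s : ℝ} (hu : u ∈ Ioc 0 (2*Real.pi)) (hs : 0 < s) (hs2 : s < 2*Real.pi) :
    toIocMod two_pi_pos 0 (u - s) = if s < u then u - s else u - s + 2*Real.pi := by
  obtain ⟨hu1, hu2⟩ := hu
  split
  · next h =>
    exact (toIocMod_eq_self two_pi_pos).mpr
      (by simp only [Set.mem_Ioc, zero_add]; constructor <;> linarith)
  · next h =>
    rw [← toIocMod_add_right two_pi_pos 0 (u - s)]
    have : u - s + 2 * Real.pi ∈ Set.Ioc (0:ℝ) (0 + 2*Real.pi) := by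
      simp only [Set.mem_Ioc, zero_add]; constructor <;> linarith [not_lt.mp h]
    exact (toIocMod_eq_self two_pi_pos).mpr this

lemma mem_arc_pre (b : AddCircle (2*Real.pi)) {s t : ℝ} (h0 : 0 < s) (hst : s < t)
    (ht : t ≤ 2*Real.pi) (x : AddCircle (2*Real.pi)) :
    x ∈ insert (b + (s : AddCircle (2*Real.pi))) (Arc (b + (s : AddCircle (2*Real.pi)))
      (b + (t : AddCircle (2*Real.pi)))) ↔ circleRep (x - b) ∈ Ico s t := by
  have hu := circleRep_mem (x - b)
  obtain ⟨hu1, hu2⟩ := hu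
  have h2 : circleRep ((b + (t : AddCircle (2*Real.pi))) - (b + (s : AddCircle (2*Real.pi))))
      = t - s := by
    have h1 : (b + (t : AddCircle (2*Real.pi))) - (b + (s : AddCircle (2*Real.pi)))
        = ((t - s : ℝ) : AddCircle (2*Real.pi)) := by
      rw [AddCircle.coe_sub]; abel
    rw [h1, circleRep_coe_of_mem ⟨by linarith, by linarith⟩]
  have h3 : x - (b + (s : AddCircle (2*Real.pi)))
      = ((circleRep (x - b) - s : ℝ) : AddCircle (2*Real.pi)) := by
    rw [AddCircle.coe_sub, coe_circleRep]; abel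
  have h4 : circleRep (x - (b + (s : AddCircle (2*Real.pi))))
      = if s < circleRep (x - b) then circleRep (x - b) - s
        else circleRep (x - b) - s + 2*Real.pi := by
    rw [h3, circleRep_coe, toIocMod_eval ⟨hu1, hu2⟩ h0 (lt_of_lt_of_le hst ht)]
  have h5 : x = b + (s : AddCircle (2*Real.pi)) ↔ circleRep (x - b) = s := by
    constructor
    · intro h
      rw [h]
      have : (b + (s : AddCircle (2*Real.pi))) - b = (s : AddCircle (2*Real.pi)) := by abel
      rw [this, circleRep_coe_of_mem ⟨h0, le_trans hst.le ht⟩]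
    · intro h
      have : x - b = (s : AddCircle (2*Real.pi)) := by rw [← h, coe_circleRep]
      rw [← this]; abel
  simp only [mem_insert_iff, Arc, mem_setOf_eq, h2, h4, h5, mem_Ico]
  by_cases hsu : s < circleRep (x - b)
  · simp only [hsu, if_true]
    constructor
    · rintro (h | h) <;> exact ⟨by linarith, by linarith⟩
    · rintro ⟨h1', h2'⟩; right; linarith
  · simp only [hsu, if_false]
    constructor
    · rintro (h | h)
      · exact ⟨h.ge, by linarith⟩
      · exfalso; linarith
    · rintro ⟨h1', h2'⟩
      exact Or.inl (le_antisymm (not_lt.mp hsu) h1')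

lemma preimage_Ico_eq (b : AddCircle (2*Real.pi)) {s t : ℝ} (h0 : 0 < s) (hst : s < t)
    (ht : t ≤ 2*Real.pi) :
    (fun x => circleRep (x - b)) ⁻¹' (Ico s t)
      = insert (b + (s : AddCircle (2*Real.pi)))
          (Arc (b + (s : AddCircle (2*Real.pi))) (b + (t : AddCircle (2*Real.pi)))) := by
  ext x
  exact (mem_arc_pre b h0 hst ht x).symm

lemma isHalfOpenArc_preimage_Ico (b : AddCircle (2*Real.pi)) {s t : ℝ} (h0 : 0 < s)
    (hst : s < t) (ht : t ≤ 2*Real.pi) :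
    IsHalfOpenArc ((fun x => circleRep (x - b)) ⁻¹' (Ico s t)) := by
  refine ⟨b + (s : AddCircle (2*Real.pi)), b + (t : AddCircle (2*Real.pi)), ?_,
    preimage_Ico_eq b h0 hst ht⟩
  intro h
  have h' : (s : AddCircle (2*Real.pi)) = (t : AddCircle (2*Real.pi)) := by
    exact add_left_cancel h
  have := congrArg circleRep h'
  rw [circleRep_coe_of_mem ⟨h0, le_trans hst.le ht⟩,
    circleRep_coe_of_mem ⟨lt_trans h0 hst, ht⟩] at this
  exact absurd this hst.ne

lemma circleRep_sub_lt {a b : AddCircle (2*Real.pi)} (hab : a ≠ b) :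
    circleRep (a - b) < 2*Real.pi := by
  rcases lt_or_eq_of_le (circleRep_mem (a - b)).2 with h | h
  · exact h
  · exfalso
    apply hab
    have : ((circleRep (a-b) : ℝ) : AddCircle (2*Real.pi)) = a - b := coe_circleRep _
    rw [h, AddCircle.coe_period] at this
    have := this.symm
    rw [sub_eq_zero] at this
    exact this

lemma halfOpenArc_coord {a b : AddCircle (2*Real.pi)} (hab : a ≠ b) :
    insert a (Arc a b) = (fun x => circleRep (x - b)) ⁻¹' (Ico (circleRep (a - b)) (2*Real.pi)) := by
  set α := circleRep (a - b) with hαdef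
  have hα0 : 0 < α := (circleRep_mem _).1
  have hαP : α < 2*Real.pi := circleRep_sub_lt hab
  have ha : a = b + (α : AddCircle (2*Real.pi)) := by
    rw [hαdef, coe_circleRep]; abel
  have hb : b = b + ((2*Real.pi : ℝ) : AddCircle (2*Real.pi)) := by
    rw [AddCircle.coe_period, add_zero]
  rw [preimage_Ico_eq b hα0 hαP le_rfl, ← ha, ← hb]

/-- The case `E = F` in the proof of Lemma 2.7: if two Borel measures on `S¹ × S¹` agree
with finite values on all products `A × B` of disjoint half-open arcs, then they agree on
the off-diagonal part `(E × E) ∖ Δ` of the square of every half-open arc `E`. -/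
theorem measure_offdiag_square_eq_of_eq_on_products_of_disjoint_arcs
    (μ μ' : Measure (AddCircle (2 * Real.pi) × AddCircle (2 * Real.pi)))
    (harcs : ∀ A B : Set (AddCircle (2 * Real.pi)), IsHalfOpenArc A → IsHalfOpenArc B →
      Disjoint A B → μ (A ×ˢ B) = μ' (A ×ˢ B) ∧ μ (A ×ˢ B) < ⊤) :
    ∀ E : Set (AddCircle (2 * Real.pi)), IsHalfOpenArc E →
      μ ((E ×ˢ E) \ Set.diagonal (AddCircle (2 * Real.pi)))
        = μ' ((E ×ˢ E) \ Set.diagonal (AddCircle (2 * Real.pi))) := by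
  intro E hE
  obtain ⟨a, b, hab, rfl⟩ := hE
  set φ : AddCircle (2 * Real.pi) → ℝ := fun x => circleRep (x - b) with hφdef
  have hφmeas : Measurable φ := measurable_circleRep.comp (measurable_sub_const b)
  have hφinj : ∀ x y, φ x = φ y → x = y := by
    intro x y h
    have h2 : x - b = y - b := circleRep_injective h
    have := congrArg (· + b) h2
    simpa using this
  set α := circleRep (a - b) with hαdef
  have hα0 : 0 < α := (circleRep_mem _).1
  have hαP : α < 2 * Real.pi := circleRep_sub_lt hab
  rw [halfOpenArc_coord hab]
  set δ : ℕ → ℝ := fun n => (2 * Real.pi - α) / 2 ^ n with hδdef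
  have hδpos : ∀ n, 0 < δ n := fun n => div_pos (by linarith) (by positivity)
  have hδ2 : ∀ n, (2 : ℝ) ^ n * δ n = 2 * Real.pi - α := by
    intro n
    have h2n : ((2 : ℝ) ^ n) ≠ 0 := by positivity
    simp only [hδdef]; field_simp
  set c : ℕ → ℕ → ℝ := fun n i => α + i * δ n with hcdef
  set cell : ℕ → ℕ → Set (AddCircle (2 * Real.pi)) :=
    fun n i => φ ⁻¹' Ico (c n i) (c n (i + 1)) with hcelldef
  have hcell_mem : ∀ n i x, x ∈ cell n i ↔ φ x ∈ Ico (c n i) (c n (i + 1)) := fun _ _ _ => Iff.rfl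
  have hcstep : ∀ n k, c n (k + 1) - c n k = δ n := by
    intro n k; simp only [hcdef]; push_cast; ring
  have hcell_bounds : ∀ n i, i < 2 ^ n → 0 < c n i ∧ c n (i + 1) ≤ 2 * Real.pi := by
    intro n i hi
    have h1 : ((i : ℝ) + 1) ≤ 2 ^ n := by exact_mod_cast Nat.succ_le_of_lt hi
    have h2 := mul_le_mul_of_nonneg_right h1 (hδpos n).le
    rw [hδ2 n] at h2
    have h3 : (0 : ℝ) ≤ (i : ℝ) * δ n := mul_nonneg (Nat.cast_nonneg i) (hδpos n).le
    constructor
    · simp only [hcdef]; linarith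
    · simp only [hcdef]; push_cast; linarith
  have hcstrict : ∀ n i, c n i < c n (i + 1) := by
    intro n i
    have := hcstep n i
    linarith [hδpos n]
  have hcell_arc : ∀ n i, i < 2 ^ n → IsHalfOpenArc (cell n i) := by
    intro n i hi
    exact isHalfOpenArc_preimage_Ico b (hcell_bounds n i hi).1 (hcstrict n i)
      (hcell_bounds n i hi).2
  have hcell_meas : ∀ n i, MeasurableSet (cell n i) := fun n i => hφmeas measurableSet_Ico
  have hc_mono : ∀ n i j, i ≤ j → c n i ≤ c n j := by
    intro n i j hij
    simp only [hcdef]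
    have : (i : ℝ) ≤ j := by exact_mod_cast hij
    nlinarith [hδpos n]
  have hcell_disj : ∀ n i j, i ≠ j → Disjoint (cell n i) (cell n j) := by
    intro n i j hij
    rw [Set.disjoint_left]
    intro x hxi hxj
    rw [hcell_mem] at hxi hxj
    rcases lt_or_gt_of_ne hij with h | h
    · have := hc_mono n (i + 1) j h
      exact absurd (lt_of_lt_of_le hxi.2 (le_trans this hxj.1)) (lt_irrefl _)
    · have := hc_mono n (j + 1) i h
      exact absurd (lt_of_lt_of_le hxj.2 (le_trans this hxi.1)) (lt_irrefl _)
  have hcell_subset : ∀ n i, i < 2 ^ n → cell n i ⊆ φ ⁻¹' Ico α (2 * Real.pi) := by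
    intro n i hi x hx
    rw [hcell_mem] at hx
    have h0 : α ≤ c n i := by
      simp only [hcdef]
      have : (0 : ℝ) ≤ (i : ℝ) * δ n := mul_nonneg (Nat.cast_nonneg i) (hδpos n).le
      linarith
    exact ⟨le_trans h0 hx.1, lt_of_lt_of_le hx.2 (hcell_bounds n i hi).2⟩
  have hfloor : ∀ n (r : ℝ), r ∈ Ico α (2 * Real.pi) →
      ⌊(r - α) / δ n⌋₊ < 2 ^ n ∧ r ∈ Ico (c n ⌊(r - α) / δ n⌋₊) (c n (⌊(r - α) / δ n⌋₊ + 1)) := by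
    intro n r hr
    have hd := hδpos n
    have h1 : 0 ≤ (r - α) / δ n := div_nonneg (by linarith [hr.1]) hd.le
    have h2 : (⌊(r - α) / δ n⌋₊ : ℝ) ≤ (r - α) / δ n := Nat.floor_le h1
    have h3 : (r - α) / δ n < ⌊(r - α) / δ n⌋₊ + 1 := Nat.lt_floor_add_one _
    have h2' : (⌊(r - α) / δ n⌋₊ : ℝ) * δ n ≤ r - α := (le_div_iff₀ hd).mp h2
    have h3' : r - α < ((⌊(r - α) / δ n⌋₊ : ℝ) + 1) * δ n := (div_lt_iff₀ hd).mp h3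
    refine ⟨?_, ?_, ?_⟩
    · rw [Nat.floor_lt h1, div_lt_iff₀ hd]
      push_cast
      nlinarith [hδ2 n, hr.2]
    · simp only [hcdef]; linarith
    · simp only [hcdef]; push_cast; linarith
  set Pn : ℕ → Finset (ℕ × ℕ) :=
    fun n => (Finset.range (2 ^ n) ×ˢ Finset.range (2 ^ n)).filter (fun q => q.1 ≠ q.2)
    with hPndef
  have hmemPn : ∀ n q, q ∈ Pn n ↔ q.1 < 2 ^ n ∧ q.2 < 2 ^ n ∧ q.1 ≠ q.2 := by
    intro n q
    simp [hPndef, Finset.mem_filter, Finset.mem_product, and_assoc]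
  set D : ℕ → Set (AddCircle (2 * Real.pi) × AddCircle (2 * Real.pi)) :=
    fun n => ⋃ q ∈ Pn n, cell n q.1 ×ˢ cell n q.2 with hDdef
  have hDeq : ((φ ⁻¹' Ico α (2 * Real.pi)) ×ˢ (φ ⁻¹' Ico α (2 * Real.pi)))
      \ Set.diagonal (AddCircle (2 * Real.pi)) = ⋃ n, D n := by
    ext p
    obtain ⟨x, y⟩ := p
    simp only [mem_diff, mem_prod, mem_preimage, Set.mem_diagonal_iff, mem_iUnion]
    constructor
    · rintro ⟨⟨hx, hy⟩, hxy⟩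
      have hne : φ x ≠ φ y := fun h => hxy (hφinj _ _ h)
      have hdist : 0 < |φ x - φ y| := abs_pos.mpr (sub_ne_zero.mpr hne)
      obtain ⟨n, hn⟩ : ∃ n : ℕ, (2 * Real.pi - α) / |φ x - φ y| < 2 ^ n :=
        pow_unbounded_of_one_lt _ one_lt_two
      have hδlt : δ n < |φ x - φ y| := by
        have h1 := (div_lt_iff₀ hdist).mp hn
        rw [hδdef]
        rw [div_lt_iff₀ (by positivity : (0:ℝ) < 2 ^ n)]
        nlinarith
      refine ⟨n, ?_⟩
      obtain ⟨hi, hxi⟩ := hfloor n (φ x) hx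
      obtain ⟨hj, hyj⟩ := hfloor n (φ y) hy
      set i := ⌊(φ x - α) / δ n⌋₊
      set j := ⌊(φ y - α) / δ n⌋₊
      have hij : i ≠ j := by
        intro h
        rw [h] at hxi
        have habs : |φ x - φ y| < δ n := by
          rw [abs_sub_lt_iff]
          constructor
          · have := hcstep n j; linarith [hxi.2, hyj.1]
          · have := hcstep n j; linarith [hyj.2, hxi.1]
        linarith
      exact Set.mem_biUnion ((hmemPn n (i, j)).mpr ⟨hi, hj, hij⟩) ⟨hxi, hyj⟩
    · rintro ⟨n, hn⟩
      obtain ⟨q, hq, hmem⟩ := Set.mem_iUnion₂.mp hn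
      obtain ⟨hq1, hq2, hq3⟩ := (hmemPn n q).mp hq
      obtain ⟨hmx, hmy⟩ := hmem
      refine ⟨⟨hcell_subset n q.1 hq1 hmx, hcell_subset n q.2 hq2 hmy⟩, ?_⟩
      intro h
      exact Set.disjoint_left.mp (hcell_disj n q.1 q.2 hq3) hmx (h ▸ hmy)
  have hsplit : ∀ n i (x : AddCircle (2 * Real.pi)), x ∈ cell n i →
      ∃ i', (i' = 2 * i ∨ i' = 2 * i + 1) ∧ x ∈ cell (n + 1) i' := by
    intro n i x hx
    rw [hcell_mem] at hx
    have hδs : δ (n + 1) = δ n / 2 := by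
      simp only [hδdef, pow_succ]; ring
    have e1 : c (n + 1) (2 * i) = c n i := by
      simp only [hcdef, hδs]; push_cast; ring
    have e2 : c (n + 1) (2 * i + 1 + 1) = c n (i + 1) := by
      simp only [hcdef, hδs]; push_cast; ring
    rcases lt_or_ge (φ x) (c (n + 1) (2 * i + 1)) with h | h
    · exact ⟨2 * i, Or.inl rfl, by rw [hcell_mem]; exact ⟨by rw [e1]; exact hx.1, h⟩⟩
    · exact ⟨2 * i + 1, Or.inr rfl, by rw [hcell_mem]; exact ⟨h, by rw [e2]; exact hx.2⟩⟩
  have hmono : Monotone D := by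
    apply monotone_nat_of_le_succ
    intro n p hp
    obtain ⟨q, hq, hmem⟩ := Set.mem_iUnion₂.mp hp
    obtain ⟨hq1, hq2, hq3⟩ := (hmemPn n q).mp hq
    obtain ⟨i', hi'form, hi'mem⟩ := hsplit n q.1 p.1 hmem.1
    obtain ⟨j', hj'form, hj'mem⟩ := hsplit n q.2 p.2 hmem.2
    have hpow : 2 ^ (n + 1) = 2 * 2 ^ n := by ring
    refine Set.mem_biUnion ((hmemPn (n + 1) (i', j')).mpr ⟨?_, ?_, ?_⟩) ⟨hi'mem, hj'mem⟩
    · omega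
    · omega
    · omega
  have hkey : ∀ n, μ (D n) = μ' (D n) := by
    intro n
    have hdisj : (↑(Pn n) : Set (ℕ × ℕ)).PairwiseDisjoint
        (fun q => cell n q.1 ×ˢ cell n q.2) := by
      intro q hq r hr hqr
      rcases eq_or_ne q.1 r.1 with h | h
      · have h2 : q.2 ≠ r.2 := fun h2 => hqr (Prod.ext h h2)
        exact Set.Disjoint.set_prod_right (hcell_disj n q.2 r.2 h2) _ _
      · exact Set.Disjoint.set_prod_left (hcell_disj n q.1 r.1 h) _ _
    have hms : ∀ q ∈ Pn n, MeasurableSet (cell n q.1 ×ˢ cell n q.2) :=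
      fun q _ => (hcell_meas n q.1).prod (hcell_meas n q.2)
    simp only [hDdef]
    rw [measure_biUnion_finset hdisj hms, measure_biUnion_finset hdisj hms]
    refine Finset.sum_congr rfl fun q hq => ?_
    obtain ⟨hq1, hq2, hq3⟩ := (hmemPn n q).mp hq
    exact (harcs _ _ (hcell_arc n q.1 hq1) (hcell_arc n q.2 hq2) (hcell_disj n q.1 q.2 hq3)).1
  rw [hDeq, hmono.measure_iUnion, hmono.measure_iUnion]
  exact iSup_congr hkey
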